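/- Let n = rK and let ξ₁,…,ξᵣ ∈ {0,1}ⁿ be indicator vectors of a partition of [n] into r clusters of size K, with Z* = ∑ₖ ξₖξₖᵀ. Suppose there exist: a diagonal matrix D* with all diagonal entries positive; a symmetric matrix B* ≥ 0 entrywise with B*ᵢⱼ > 0 whenever i,j are in distinct clusters and B*ᵢⱼZ*ᵢⱼ = 0 for all i,j; and λ* ∈ ℝⁿ; such that S* := D* - B* - A + λ*𝟏ᵀ + 𝟏(λ*)ᵀ is positive semidefinite and S*ξₖ = 0 for all k ∈ [r]. Then Z* is the unique maximizer of ⟨A,Z⟩ over symmetric positive semidefinite Z with Zᵢᵢ = 1, Zᵢⱼ ≥ 0 for all i,j, and Z𝟏 = K𝟏. -/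

import Mathlib

open Matrix

/-- Trace inner product `⟨A,Z⟩ = ∑ᵢⱼ Aᵢⱼ Zᵢⱼ`. -/
def traceInner {n : ℕ} (A Z : Matrix (Fin n) (Fin n) ℝ) : ℝ :=
  ∑ i, ∑ j, A i j * Z i j

open scoped MatrixOrder in
lemma traceInner_psd_nonneg {n : ℕ} {S Z : Matrix (Fin n) (Fin n) ℝ}
    (hS : S.PosSemidef) (hZ : Z.PosSemidef) : 0 ≤ traceInner S Z := by
  have hSmul : CFC.sqrt S * CFC.sqrt S = S := CFC.sqrt_mul_sqrt_self S hS.nonneg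
  have hZmul : CFC.sqrt Z * CFC.sqrt Z = Z := CFC.sqrt_mul_sqrt_self Z hZ.nonneg
  set s := CFC.sqrt S
  set t := CFC.sqrt Z
  have hssymm : sᴴ = s := (CFC.sqrt_nonneg S).posSemidef.1
  have htsymm : tᴴ = t := (CFC.sqrt_nonneg Z).posSemidef.1
  have h1 : traceInner S Z = Matrix.trace (S * Zᵀ) := by
    simp [traceInner, Matrix.trace, Matrix.mul_apply, Matrix.diag]
  have hZt : Zᵀ = Z := by
    have := hZ.1; rwa [Matrix.IsHermitian, conjTranspose_eq_transpose_of_trivial] at this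
  rw [h1, hZt, ← hSmul, ← hZmul]
  have h2 : s * s * (t * t) = s * (s * t * t) := by
    simp [Matrix.mul_assoc]
  rw [h2, Matrix.trace_mul_comm]
  have h5 : s * t * t * s = (s * t) * (s * t)ᴴ := by
    rw [conjTranspose_mul, hssymm, htsymm, Matrix.mul_assoc]
  rw [h5]
  rw [Matrix.trace]
  apply Finset.sum_nonneg
  intro i _
  simp only [Matrix.diag, Matrix.mul_apply, conjTranspose_apply, star_trivial]
  exact Finset.sum_nonneg fun j _ => mul_self_nonneg _

lemma entry_le_one {n : ℕ} {Z : Matrix (Fin n) (Fin n) ℝ}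
    (hZ : Z.PosSemidef) (h1 : ∀ i, Z i i = 1) (i j : Fin n) : Z i j ≤ 1 := by
  rcases eq_or_ne i j with rfl | hij
  · exact (h1 i).le
  have hsym : Z j i = Z i j := by
    have := hZ.1; rw [Matrix.IsHermitian] at this
    have := congrFun (congrFun this i) j
    simpa using this
  have key := hZ.dotProduct_mulVec_nonneg (fun t => (if t = i then (1:ℝ) else 0) - (if t = j then 1 else 0))
  have hmv : ∀ t, Z.mulVec (fun t => (if t = i then (1:ℝ) else 0) - (if t = j then 1 else 0)) t
      = Z t i - Z t j := by
    intro t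
    simp [Matrix.mulVec, dotProduct, mul_sub, Finset.sum_sub_distrib, mul_ite]
  simp only [star_trivial, dotProduct, hmv] at key
  have h0 : (0:ℝ) ≤ (Z i i - Z i j) - (Z j i - Z j j) := by
    have e : ∑ t, ((if t = i then (1:ℝ) else 0) - (if t = j then 1 else 0)) * (Z t i - Z t j)
        = (Z i i - Z i j) - (Z j i - Z j j) := by
      simp [sub_mul, Finset.sum_sub_distrib, ite_mul, hij]
    rw [e] at key; exact key
  rw [h1 i, h1 j, hsym] at h0
  linarith

/-- Dual certificate lemma for the SDP relaxation in the SBM with `r` equal-sized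
clusters. The partition of `[n]` into `r` clusters of size `K` is encoded by the
cluster-assignment map `c : Fin n → Fin r`; `ξ k` is the indicator vector of cluster `k`
and `Z* = ∑ₖ ξₖξₖᵀ`. -/
theorem sdp_dual_certificate_r_clusters {n r K : ℕ}
    (hn : n = r * K)
    (c : Fin n → Fin r)
    (hsize : ∀ k : Fin r, (Finset.univ.filter fun i => c i = k).card = K)
    (ξ : Fin r → Fin n → ℝ) (hξ : ∀ k i, ξ k i = if c i = k then 1 else 0)
    (Zstar : Matrix (Fin n) (Fin n) ℝ)
    (hZstar : Zstar = Matrix.of fun i j => if c i = c j then (1 : ℝ) else 0)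
    (A B : Matrix (Fin n) (Fin n) ℝ) (hA : A.IsSymm) (hB : B.IsSymm)
    (d : Fin n → ℝ) (hd : ∀ i, 0 < d i)
    (hBnn : ∀ i j, 0 ≤ B i j)
    (hBpos : ∀ i j, c i ≠ c j → 0 < B i j)
    (hBZ : ∀ i j, B i j * Zstar i j = 0)
    (lam : Fin n → ℝ)
    (S : Matrix (Fin n) (Fin n) ℝ)
    (hS : S = Matrix.diagonal d - B - A + Matrix.of (fun i j => lam i + lam j))
    (hpsd : S.PosSemidef)
    (hSξ : ∀ k, S.mulVec (ξ k) = 0) :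
    ∀ Z : Matrix (Fin n) (Fin n) ℝ,
      Z.PosSemidef → (∀ i, Z i i = 1) → (∀ i j, 0 ≤ Z i j) →
      (Z.mulVec (fun _ => 1) = fun _ => (K : ℝ)) →
        traceInner A Z ≤ traceInner A Zstar ∧
        (traceInner A Z = traceInner A Zstar → Z = Zstar) := by
  intro Z hZpsd hZdiag hZnn hZrow
  have hZsym : ∀ i j, Z j i = Z i j := by
    intro i j
    have := hZpsd.1
    rw [Matrix.IsHermitian] at this
    have := congrFun (congrFun this i) j
    simpa using this
  have hZrowsum : ∀ i, ∑ j, Z i j = K := by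
    intro i
    have := congrFun hZrow i
    simpa [Matrix.mulVec, dotProduct] using this
  have hZsd : ∀ i, Zstar i i = 1 := by simp [hZstar]
  have hZssym : ∀ i j, Zstar j i = Zstar i j := by
    intro i j
    simp only [hZstar, Matrix.of_apply]
    by_cases h : c i = c j
    · rw [if_pos h, if_pos h.symm]
    · rw [if_neg h, if_neg (fun hh : c j = c i => h hh.symm)]
  have hZsrowsum : ∀ i, ∑ j, Zstar i j = K := by
    intro i
    have e : ∑ j, Zstar i j = ∑ j, if c j = c i then (1:ℝ) else 0 := by
      refine Finset.sum_congr rfl fun j _ => ?_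
      simp only [hZstar, Matrix.of_apply]
      by_cases h : c i = c j
      · rw [if_pos h, if_pos h.symm]
      · rw [if_neg h, if_neg (fun hh : c j = c i => h hh.symm)]
    rw [e, Finset.sum_boole, hsize (c i)]
  -- the expansion identity
  have expand : ∀ W : Matrix (Fin n) (Fin n) ℝ, (∀ i, W i i = 1) → (∀ i, ∑ j, W i j = K) →
      (∀ i j, W j i = W i j) →
      traceInner A W = (∑ i, d i) + 2 * K * (∑ i, lam i) - traceInner B W - traceInner S W := by
    intro W hWd hWr hWs
    have hAentry : ∀ i j, A i j = Matrix.diagonal d i j - B i j + (lam i + lam j) - S i j := by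
      intro i j
      have := congrFun (congrFun hS i) j
      simp only [Matrix.sub_apply, Matrix.add_apply, Matrix.of_apply] at this
      linarith
    have e1 : ∑ i, ∑ j, Matrix.diagonal d i j * W i j = ∑ i, d i := by
      refine Finset.sum_congr rfl fun i _ => ?_
      rw [Finset.sum_eq_single i]
      · simp [hWd i]
      · intro b _ hb; simp [Matrix.diagonal_apply_ne d (Ne.symm hb)]
      · simp
    have colsum : ∀ j, ∑ i, W i j = K := by
      intro j
      rw [show ∑ i, W i j = ∑ i, W j i from Finset.sum_congr rfl fun i _ => hWs j i, hWr j]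
    have e2 : ∑ i, ∑ j, (lam i + lam j) * W i j = 2 * K * ∑ i, lam i := by
      calc ∑ i, ∑ j, (lam i + lam j) * W i j
          = ∑ i, ∑ j, (lam i * W i j + lam j * W i j) := by
            refine Finset.sum_congr rfl fun i _ => Finset.sum_congr rfl fun j _ => ?_; ring
        _ = (∑ i, ∑ j, lam i * W i j) + ∑ i, ∑ j, lam j * W i j := by
            simp [Finset.sum_add_distrib]
        _ = (∑ i, lam i * ∑ j, W i j) + ∑ j, lam j * ∑ i, W i j := by
            rw [Finset.sum_comm (f := fun i j => lam j * W i j)]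
            simp [Finset.mul_sum]
        _ = (∑ i, lam i * K) + ∑ j, lam j * K := by simp [hWr, colsum]
        _ = 2 * K * ∑ i, lam i := by rw [← Finset.sum_mul]; ring
    have key : traceInner A W = (∑ i, ∑ j, Matrix.diagonal d i j * W i j) - traceInner B W
        + (∑ i, ∑ j, (lam i + lam j) * W i j) - traceInner S W := by
      unfold traceInner
      rw [← Finset.sum_sub_distrib, ← Finset.sum_add_distrib, ← Finset.sum_sub_distrib]
      refine Finset.sum_congr rfl fun i _ => ?_
      rw [← Finset.sum_sub_distrib, ← Finset.sum_add_distrib, ← Finset.sum_sub_distrib]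
      refine Finset.sum_congr rfl fun j _ => ?_
      rw [hAentry i j]; ring
    rw [key, e1, e2]; ring
  -- ⟨B, Zstar⟩ = 0 and ⟨S, Zstar⟩ = 0
  have hBZs : traceInner B Zstar = 0 := by
    unfold traceInner
    exact Finset.sum_eq_zero fun i _ => Finset.sum_eq_zero fun j _ => hBZ i j
  have hZdecomp : ∀ i j, Zstar i j = ∑ k, ξ k i * ξ k j := by
    intro i j
    simp only [hZstar, Matrix.of_apply, hξ]
    rw [Finset.sum_congr rfl (fun k _ => by rw [ite_mul, one_mul, zero_mul])]
    rw [Finset.sum_ite_eq Finset.univ (c i) (fun k => if c j = k then (1:ℝ) else 0)]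
    simp [eq_comm]
  have hSZs : traceInner S Zstar = 0 := by
    unfold traceInner
    calc ∑ i, ∑ j, S i j * Zstar i j
        = ∑ i, ∑ j, ∑ k, ξ k i * (S i j * ξ k j) := by
          refine Finset.sum_congr rfl fun i _ => Finset.sum_congr rfl fun j _ => ?_
          rw [hZdecomp i j, Finset.mul_sum]
          exact Finset.sum_congr rfl fun k _ => by ring
      _ = ∑ i, ∑ k, ξ k i * (∑ j, S i j * ξ k j) := by
          refine Finset.sum_congr rfl fun i _ => ?_
          rw [Finset.sum_comm]
          exact Finset.sum_congr rfl fun k _ => (Finset.mul_sum _ _ _).symm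
      _ = ∑ k, ∑ i, ξ k i * (∑ j, S i j * ξ k j) := Finset.sum_comm
      _ = ∑ k, ∑ i, ξ k i * (S.mulVec (ξ k) i) := rfl
      _ = 0 := by simp [hSξ]
  have hAZstar : traceInner A Zstar = (∑ i, d i) + 2 * K * (∑ i, lam i) := by
    rw [expand Zstar hZsd hZsrowsum hZssym, hBZs, hSZs]; ring
  have hAZ : traceInner A Z = (∑ i, d i) + 2 * K * (∑ i, lam i)
      - traceInner B Z - traceInner S Z := expand Z hZdiag hZrowsum hZsym
  have hBZnn : 0 ≤ traceInner B Z :=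
    Finset.sum_nonneg fun i _ => Finset.sum_nonneg fun j _ => mul_nonneg (hBnn i j) (hZnn i j)
  have hSZnn : 0 ≤ traceInner S Z := traceInner_psd_nonneg hpsd hZpsd
  constructor
  · rw [hAZ, hAZstar]; linarith
  · intro heq
    rw [hAZ, hAZstar] at heq
    have hBZ0 : traceInner B Z = 0 := by linarith
    have hterm : ∀ i j, B i j * Z i j = 0 := by
      have h1 := (Finset.sum_eq_zero_iff_of_nonneg
        (fun i _ => Finset.sum_nonneg fun j _ => mul_nonneg (hBnn i j) (hZnn i j))).mp hBZ0
      intro i j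
      exact (Finset.sum_eq_zero_iff_of_nonneg
        (fun j _ => mul_nonneg (hBnn i j) (hZnn i j))).mp (h1 i (Finset.mem_univ i)) j
        (Finset.mem_univ j)
    have hZoff : ∀ i j, c i ≠ c j → Z i j = 0 := by
      intro i j hij
      rcases mul_eq_zero.mp (hterm i j) with h | h
      · exact absurd h (ne_of_gt (hBpos i j hij))
      · exact h
    ext i j
    by_cases hc : c i = c j
    · have hZsij : Zstar i j = 1 := by simp [hZstar, hc]
      rw [hZsij]
      set F := Finset.univ.filter (fun t => c t = c i) with hF
      have hzero : ∑ t ∈ Finset.univ.filter (fun t => ¬ c t = c i), Z i t = 0 :=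
        Finset.sum_eq_zero fun t ht =>
          hZoff i t (fun h => (Finset.mem_filter.mp ht).2 h.symm)
      have hsplit : ∑ t ∈ F, Z i t = K := by
        have h := hZrowsum i
        rw [← Finset.sum_filter_add_sum_filter_not Finset.univ (fun t => c t = c i)
          (fun t => Z i t), hzero, add_zero] at h
        exact h
      have hcardF : F.card = K := hsize (c i)
      have hones : ∀ t ∈ F, Z i t = 1 := by
        have hsum : ∑ t ∈ F, (1 - Z i t) = 0 := by
          rw [Finset.sum_sub_distrib, Finset.sum_const, hcardF, hsplit]; simp
        have hnn : ∀ t ∈ F, 0 ≤ 1 - Z i t := fun t _ => by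
          linarith [entry_le_one hZpsd hZdiag i t]
        intro t ht
        have := (Finset.sum_eq_zero_iff_of_nonneg hnn).mp hsum t ht
        linarith
      exact hones j (Finset.mem_filter.mpr ⟨Finset.mem_univ j, hc.symm⟩)
    · rw [hZoff i j hc]
      simp [hZstar, hc]
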